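/- Let F : ℂ^n → ℂ^n be a polynomial map of the form F = Id + H, i.e., F_i = X_i + H_i(X_1,…,X_n), where each H_i is a nonzero polynomial whose lower degree d_i is at least 2. If JH · H = 0, i.e., Σ_{j=1}^n (∂H_i/∂X_j)·H_j = 0 for all 1 ≤ i ≤ n, then F is a quasi-translation, i.e., X_i = F_i − H_i(F_1,…,F_n) for all 1 ≤ i ≤ n. -/
import Mathlib

open MvPolynomial Finset

namespace QT

variable {n : ℕ}

noncomputable def phi (H : Fin n → MvPolynomial (Fin n) ℂ) :
    MvPolynomial (Fin n) ℂ →ₐ[ℂ] Polynomial (MvPolynomial (Fin n) ℂ) :=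
  aeval (fun j => Polynomial.C (X j) + Polynomial.X * Polynomial.C (H j))

lemma phi_X (H : Fin n → MvPolynomial (Fin n) ℂ) (j : Fin n) :
    phi H (X j) = Polynomial.C (X j) + Polynomial.X * Polynomial.C (H j) := by
  simp [phi]

lemma deriv_phi (H : Fin n → MvPolynomial (Fin n) ℂ) (P : MvPolynomial (Fin n) ℂ) :
    Polynomial.derivative (phi H P) = ∑ j, phi H (pderiv j P) * Polynomial.C (H j) := by
  induction P using MvPolynomial.induction_on with
  | C r => simp [phi]
  | add p q hp hq =>
      simp only [map_add, hp, hq, add_mul, Finset.sum_add_distrib]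
  | mul_X p j hp =>
      rw [map_mul, Polynomial.derivative_mul, hp, phi_X]
      have hd : Polynomial.derivative (Polynomial.C (X j : MvPolynomial (Fin n) ℂ)
          + Polynomial.X * Polynomial.C (H j)) = Polynomial.C (H j) := by simp
      rw [hd]
      simp only [pderiv_mul, map_add, map_mul, add_mul, Finset.sum_add_distrib, phi_X]
      congr 1
      · rw [Finset.sum_mul]
        exact Finset.sum_congr rfl fun _ _ => by ring
      · simp [pderiv_X, Pi.single_apply, apply_ite (phi H), Finset.sum_ite_eq, mul_comm]

lemma coeff_zero_phi (H : Fin n → MvPolynomial (Fin n) ℂ) (P : MvPolynomial (Fin n) ℂ) :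
    (phi H P).coeff 0 = P := by
  rw [Polynomial.coeff_zero_eq_eval_zero]
  have : ((Polynomial.aeval (0 : MvPolynomial (Fin n) ℂ)).restrictScalars ℂ).comp (phi H)
      = AlgHom.id ℂ _ := by
    apply MvPolynomial.algHom_ext
    intro j
    simp [phi]
  calc Polynomial.eval 0 (phi H P)
      = (((Polynomial.aeval (0 : MvPolynomial (Fin n) ℂ)).restrictScalars ℂ).comp (phi H)) P := by
        simp [Polynomial.aeval_def, Polynomial.eval₂_eq_eval_map]
    _ = P := by rw [this]; rfl

end QT

theorem stmt_14 {n : ℕ} (H : Fin n → MvPolynomial (Fin n) ℂ)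
    (hHne : ∀ i, H i ≠ 0)
    (hH0 : ∀ i, homogeneousComponent 0 (H i) = 0)
    (hH1 : ∀ i, homogeneousComponent 1 (H i) = 0)
    (F : Fin n → MvPolynomial (Fin n) ℂ) (hF : ∀ i, F i = X i + H i)
    (hJH : ∀ i : Fin n, ∑ j : Fin n, pderiv j (H i) * H j = 0) :
    ∀ i : Fin n, (X i : MvPolynomial (Fin n) ℂ) = F i - aeval F (H i) := by
  have key : ∀ k : ℕ, ∀ i : Fin n,
      (QT.phi H (H i) - Polynomial.C (H i)).coeff k = 0 := by
    intro k
    induction k using Nat.strong_induction_on with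
    | _ k ih =>
      intro i
      match k with
      | 0 => simp [QT.coeff_zero_phi]
      | (m+1) =>
        have h0 : (∑ j, QT.phi H (pderiv j (H i)) * QT.phi H (H j)) = 0 := by
          simp only [← map_mul, ← map_sum, hJH i, map_zero]
        have hder : Polynomial.derivative (QT.phi H (H i) - Polynomial.C (H i))
            = -∑ j, QT.phi H (pderiv j (H i)) * (QT.phi H (H j) - Polynomial.C (H j)) := by
          rw [map_sub, Polynomial.derivative_C, sub_zero, QT.deriv_phi]
          rw [eq_neg_iff_add_eq_zero, ← Finset.sum_add_distrib, ← h0]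
          exact Finset.sum_congr rfl fun _ _ => by ring
        have hc := congrArg (fun p => Polynomial.coeff p m) hder
        simp only [Polynomial.coeff_derivative] at hc
        have hrhs : (-∑ j, QT.phi H (pderiv j (H i)) *
            (QT.phi H (H j) - Polynomial.C (H j))).coeff m = 0 := by
          rw [Polynomial.coeff_neg, Polynomial.finset_sum_coeff]
          rw [Finset.sum_eq_zero, neg_zero]
          intro j _
          rw [Polynomial.coeff_mul, Finset.sum_eq_zero]
          intro x hx
          have hx2 : x.2 < m + 1 := by
            have := Finset.HasAntidiagonal.mem_antidiagonal.mp hx; omega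
          rw [ih x.2 hx2 j, mul_zero]
        rw [hrhs] at hc
        have hnz : ((m : MvPolynomial (Fin n) ℂ) + 1) ≠ 0 := by
          have : ((m + 1 : ℕ) : MvPolynomial (Fin n) ℂ) ≠ 0 :=
            Nat.cast_ne_zero.mpr (Nat.succ_ne_zero m)
          push_cast at this
          exact this
        rcases mul_eq_zero.mp hc with h | h
        · exact h
        · exact absurd h hnz
  intro i
  have hu : QT.phi H (H i) = Polynomial.C (H i) := by
    apply Polynomial.ext
    intro k
    have hk := key k i
    rw [Polynomial.coeff_sub, sub_eq_zero] at hk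
    exact hk
  have hcomp : ((Polynomial.aeval (1 : MvPolynomial (Fin n) ℂ)).restrictScalars ℂ).comp
      (QT.phi H) = aeval F := by
    apply MvPolynomial.algHom_ext
    intro j
    simp [QT.phi, hF]
  have haev : aeval F (H i) = H i := by
    calc aeval F (H i)
        = (((Polynomial.aeval (1 : MvPolynomial (Fin n) ℂ)).restrictScalars ℂ).comp
            (QT.phi H)) (H i) := by rw [hcomp]
      _ = H i := by
          show Polynomial.aeval (1 : MvPolynomial (Fin n) ℂ) (QT.phi H (H i)) = H i
          rw [hu]; simp
  rw [hF, haev]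
  ring
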